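/- Fix an integer q≥3 and B≥0 with e^{−B}(q−1)>1. Let W be a Pareto random variable with parameter τ≥4, i.e., with density f_W(w)=(τ−1)·w^{−τ} for w≥1 and 0 otherwise. Define 𝓕_B(t)=E[(W/E[W])·(e^{tW+B}−1)/(e^{tW+B}+q−1)] for t≥0. Then t↦𝓕_B''(t) is first positive and then negative on (0,∞): there exists t_*>0 such that 𝓕_B''(t)>0 for 0<t<t_* and 𝓕_B''(t)<0 for t>t_*. -/

import Mathlib

open MeasureTheory Filter Topology Set
open scoped ENNReal NNReal

noncomputable def gP (c x : ℝ) : ℝ := (Real.exp x - 1) / (Real.exp x + c - 1)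
noncomputable def g1 (c x : ℝ) : ℝ := c * Real.exp x / (Real.exp x + c - 1) ^ 2
noncomputable def g2 (c x : ℝ) : ℝ :=
  c * Real.exp x * (c - 1 - Real.exp x) / (Real.exp x + c - 1) ^ 3

lemma den_pos {c : ℝ} (hc : 2 ≤ c) (x : ℝ) : 0 < Real.exp x + c - 1 := by
  have := Real.exp_pos x; linarith

lemma hasDerivAt_gP {c : ℝ} (hc : 2 ≤ c) (x : ℝ) : HasDerivAt (gP c) (g1 c x) x := by
  have hd := den_pos hc x
  have h : HasDerivAt (gP c)
      ((Real.exp x * (Real.exp x + c - 1) - (Real.exp x - 1) * Real.exp x) /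
        (Real.exp x + c - 1) ^ 2) x := by
    exact ((Real.hasDerivAt_exp x).sub_const 1).div
      (((Real.hasDerivAt_exp x).add_const c).sub_const 1) hd.ne'
  · convert h using 1
    unfold g1; field_simp; ring

lemma hasDerivAt_g1 {c : ℝ} (hc : 2 ≤ c) (x : ℝ) : HasDerivAt (g1 c) (g2 c x) x := by
  have hd := den_pos hc x
  have hden : HasDerivAt (fun y => (Real.exp y + c - 1) ^ 2) (2 * (Real.exp x + c - 1) * Real.exp x) x := by
    have := (((Real.hasDerivAt_exp x).add_const c).sub_const 1).fun_pow 2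
    simpa [mul_comm, mul_assoc] using this
  have h : HasDerivAt (g1 c)
      ((c * Real.exp x * (Real.exp x + c - 1) ^ 2 -
        c * Real.exp x * (2 * (Real.exp x + c - 1) * Real.exp x)) /
        ((Real.exp x + c - 1) ^ 2) ^ 2) x := by
    exact (((Real.hasDerivAt_exp x).const_mul c).div hden (by positivity))
  convert h using 1
  unfold g2; rw [div_eq_div_iff (by positivity) (by positivity)]; ring

lemma abs_gP_le_one {c : ℝ} (hc : 2 ≤ c) (x : ℝ) : |gP c x| ≤ 1 := by
  have hd := den_pos hc x
  have he := Real.exp_pos x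
  rw [gP, abs_div, abs_of_pos hd, div_le_one hd, abs_le]
  constructor <;> nlinarith [abs_nonneg (Real.exp x - 1)]

lemma g1_nonneg {c : ℝ} (hc : 2 ≤ c) (x : ℝ) : 0 ≤ g1 c x := by
  have hd := den_pos hc x
  have he := Real.exp_pos x
  unfold g1; positivity

lemma g1_le {c : ℝ} (hc : 2 ≤ c) (x : ℝ) : g1 c x ≤ c := by
  have hd := den_pos hc x
  have he := Real.exp_pos x
  rw [g1, div_le_iff₀ (by positivity)]
  nlinarith [sq_nonneg (Real.exp x + c - 2), sq_nonneg (Real.exp x - 1)]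

lemma abs_g2_le {c : ℝ} (hc : 2 ≤ c) (x : ℝ) : |g2 c x| ≤ c * Real.exp (-x) := by
  have hd := den_pos hc x
  have he := Real.exp_pos x
  have habs : |c - 1 - Real.exp x| ≤ Real.exp x + c - 1 := by
    rw [abs_le]; constructor <;> linarith
  have h1 : |g2 c x| ≤ c * Real.exp x * (Real.exp x + c - 1) / (Real.exp x + c - 1) ^ 3 := by
    rw [g2, abs_div, abs_of_pos (by positivity : (0:ℝ) < (Real.exp x + c - 1) ^ 3),
      abs_mul, abs_of_pos (by positivity : (0:ℝ) < c * Real.exp x)]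
    gcongr
  refine h1.trans ?_
  have key : c * Real.exp x * (Real.exp x + c - 1) / (Real.exp x + c - 1) ^ 3
      = c * Real.exp x / (Real.exp x + c - 1) ^ 2 := by
    field_simp
  rw [key]
  have h2 : (Real.exp x) ^ 2 ≤ (Real.exp x + c - 1) ^ 2 := by nlinarith
  calc c * Real.exp x / (Real.exp x + c - 1) ^ 2 ≤ c * Real.exp x / (Real.exp x) ^ 2 := by
        gcongr
    _ = c * Real.exp (-x) := by rw [Real.exp_neg]; field_simp

lemma g2_pos {c : ℝ} (hc : 2 ≤ c) {x : ℝ} (h : Real.exp x < c - 1) : 0 < g2 c x := by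
  have hd := den_pos hc x
  have he := Real.exp_pos x
  rw [g2]
  have : 0 < c - 1 - Real.exp x := by linarith
  positivity

lemma g2_nonneg {c : ℝ} (hc : 2 ≤ c) {x : ℝ} (h : Real.exp x ≤ c - 1) : 0 ≤ g2 c x := by
  have hd := den_pos hc x
  have he := Real.exp_pos x
  rw [g2]
  have : 0 ≤ c - 1 - Real.exp x := by linarith
  positivity

lemma g2_neg {c : ℝ} (hc : 2 ≤ c) {x : ℝ} (h : c - 1 < Real.exp x) : g2 c x < 0 := by
  have hd := den_pos hc x
  have he := Real.exp_pos x
  rw [g2]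
  apply div_neg_of_neg_of_pos ?_ (by positivity)
  have h1 : c - 1 - Real.exp x < 0 := by linarith
  exact mul_neg_of_pos_of_neg (by positivity) h1

lemma continuous_g2 {c : ℝ} (hc : 2 ≤ c) : Continuous (g2 c) := by
  apply Continuous.div (by continuity) (by continuity)
  intro x
  exact (pow_pos (den_pos hc x) 3).ne'

lemma measurable_g2 {c : ℝ} : Measurable (g2 c) := by
  unfold g2; fun_prop

lemma measurable_g1 {c : ℝ} : Measurable (g1 c) := by
  unfold g1; fun_prop

lemma measurable_gP {c : ℝ} : Measurable (gP c) := by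
  unfold gP; fun_prop

lemma pareto_integral_rep {Ω : Type*} [MeasurableSpace Ω] (μ : Measure Ω)
    (W : Ω → ℝ) (hWmeas : Measurable W) (τ : ℝ) (hτ : 4 ≤ τ)
    (hlaw : μ.map W = (volume : Measure ℝ).withDensity
      (fun x => ENNReal.ofReal
        (Set.indicator (Set.Ici (1 : ℝ)) (fun v => (τ - 1) * v ^ (-τ)) x)))
    (f : ℝ → ℝ) (hf : Measurable f) :
    ∫ ω, f (W ω) ∂μ = ∫ x in Ioi (1:ℝ), ((τ - 1) * x ^ (-τ)) * f x := by
  have h1 : ∫ ω, f (W ω) ∂μ = ∫ x, f x ∂(μ.map W) :=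
    (integral_map hWmeas.aemeasurable hf.aestronglyMeasurable).symm
  rw [h1, hlaw]
  set ρ : ℝ → ℝ := Set.indicator (Set.Ici (1:ℝ)) (fun v => (τ - 1) * v ^ (-τ)) with hρ
  have hρm : Measurable ρ := by
    apply Measurable.indicator ?_ measurableSet_Ici
    fun_prop
  have hcoe : (fun x => ENNReal.ofReal
      (Set.indicator (Set.Ici (1 : ℝ)) (fun v => (τ - 1) * v ^ (-τ)) x))
      = fun x => ((ρ x).toNNReal : ℝ≥0∞) := rfl
  rw [hcoe, integral_withDensity_eq_integral_smul hρm.real_toNNReal]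
  have hval : ∀ x, (ρ x).toNNReal • f x
      = Set.indicator (Set.Ici (1:ℝ)) (fun x => ((τ - 1) * x ^ (-τ)) * f x) x := by
    intro x
    by_cases hx : x ∈ Set.Ici (1:ℝ)
    · have hx0 : (0:ℝ) < x := lt_of_lt_of_le zero_lt_one hx
      have hnn : 0 ≤ (τ - 1) * x ^ (-τ) :=
        mul_nonneg (by linarith) (Real.rpow_nonneg hx0.le _)
      rw [Set.indicator_of_mem hx, hρ, Set.indicator_of_mem hx, NNReal.smul_def,
        Real.coe_toNNReal _ hnn, smul_eq_mul]
    · rw [Set.indicator_of_notMem hx, hρ, Set.indicator_of_notMem hx]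
      simp
  rw [show (fun x => (ρ x).toNNReal • f x)
      = Set.indicator (Set.Ici (1:ℝ)) (fun x => ((τ - 1) * x ^ (-τ)) * f x) from funext hval]
  rw [integral_indicator measurableSet_Ici, integral_Ici_eq_integral_Ioi]

lemma pareto_exp {Ω : Type*} [MeasurableSpace Ω] (μ : Measure Ω)
    (W : Ω → ℝ) (hWmeas : Measurable W) (τ : ℝ) (hτ : 4 ≤ τ)
    (hlaw : μ.map W = (volume : Measure ℝ).withDensity
      (fun x => ENNReal.ofReal
        (Set.indicator (Set.Ici (1 : ℝ)) (fun v => (τ - 1) * v ^ (-τ)) x))) :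
    ∫ ω, W ω ∂μ = (τ - 1) / (τ - 2) := by
  have h := pareto_integral_rep μ W hWmeas τ hτ hlaw (fun x => x) measurable_id
  rw [show (fun ω => W ω) = fun ω => (fun x => x) (W ω) from rfl] at h ⊢
  rw [h]
  have h2 : ∀ x ∈ Ioi (1:ℝ), ((τ - 1) * x ^ (-τ)) * x = (τ - 1) * x ^ (-τ + 1) := by
    intro x hx
    have hx0 : x ≠ 0 := by have : (1:ℝ) < x := hx; linarith
    rw [Real.rpow_add_one hx0, mul_assoc]
  rw [setIntegral_congr_fun measurableSet_Ioi h2, integral_const_mul,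
    integral_Ioi_rpow_of_lt (by linarith) zero_lt_one, Real.one_rpow]
  have hne2 : (τ - 2 : ℝ) ≠ 0 := by linarith
  have hne : (-τ + 1 + 1 : ℝ) ≠ 0 := by intro h; apply hne2; linarith
  have key : (-1 : ℝ) / (-τ + 1 + 1) = 1 / (τ - 2) := by
    rw [div_eq_div_iff hne hne2]; ring
  rw [key, mul_one_div]

lemma integrableOn_aux {f : ℝ → ℝ} (hm : AEStronglyMeasurable f (volume.restrict (Ioi (1:ℝ))))
    {C a : ℝ} (ha : a < -1) (h : ∀ x ∈ Ioi (1:ℝ), |f x| ≤ C * x ^ a) :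
    IntegrableOn f (Ioi (1:ℝ)) := by
  apply Integrable.mono' ((integrableOn_Ioi_rpow_of_lt ha zero_lt_one).const_mul C) hm
  filter_upwards [ae_restrict_mem measurableSet_Ioi] with x hx
  simpa [Real.norm_eq_abs] using h x hx

lemma meas_aux {τ B E : ℝ} (t : ℝ) (g : ℝ → ℝ) (hg : Measurable g) (h : ℝ → ℝ)
    (hh : Measurable h) :
    AEStronglyMeasurable (fun x : ℝ => ((τ - 1) * x ^ (-τ)) * (x / E * (h x * g (t * x + B))))
      (volume.restrict (Ioi (1:ℝ))) := by
  apply Measurable.aestronglyMeasurable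
  fun_prop

lemma hasDerivAt_int1 {c τ B E : ℝ} (hc : 2 ≤ c) (hτ : 4 ≤ τ) (hB : 0 ≤ B) (hE : 0 < E)
    (t₀ : ℝ) :
    HasDerivAt (fun t => ∫ x in Ioi (1:ℝ), ((τ - 1) * x ^ (-τ)) * (x / E * gP c (t * x + B)))
      (∫ x in Ioi (1:ℝ), ((τ - 1) * x ^ (-τ)) * (x / E * (x * g1 c (t₀ * x + B)))) t₀ := by
  have hτ1 : (0:ℝ) < τ - 1 := by linarith
  have main := hasDerivAt_integral_of_dominated_loc_of_deriv_le (μ := volume.restrict (Ioi 1))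
    (F := fun t x => ((τ - 1) * x ^ (-τ)) * (x / E * gP c (t * x + B)))
    (F' := fun t x => ((τ - 1) * x ^ (-τ)) * (x / E * (x * g1 c (t * x + B))))
    (bound := fun x => ((τ - 1) * c / E) * x ^ (-τ + 2)) (x₀ := t₀) (Metric.ball_mem_nhds t₀ zero_lt_one)
    ?_ ?_ ?_ ?_ ?_ ?_
  · exact main.2
  · filter_upwards with t
    have : AEStronglyMeasurable (fun x : ℝ => ((τ - 1) * x ^ (-τ)) * (x / E * ((fun _ => 1) x * gP c (t * x + B))))
        (volume.restrict (Ioi (1:ℝ))) := meas_aux t (gP c) measurable_gP _ measurable_const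
    simpa using this
  · apply integrableOn_aux ?_ (show -τ + 1 < -1 by linarith)
    · intro x hx
      have hx0 : (0:ℝ) < x := lt_trans zero_lt_one hx
      have h1 : |gP c (t₀ * x + B)| ≤ 1 := abs_gP_le_one hc _
      have hA : (0:ℝ) ≤ (τ - 1) * x ^ (-τ) := mul_nonneg hτ1.le (Real.rpow_nonneg hx0.le _)
      calc |((τ - 1) * x ^ (-τ)) * (x / E * gP c (t₀ * x + B))|
          = ((τ - 1) * x ^ (-τ)) * (x / E) * |gP c (t₀ * x + B)| := by
            simp only [abs_mul, abs_of_nonneg hτ1.le, abs_of_nonneg (Real.rpow_nonneg hx0.le (-τ)),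
              abs_of_nonneg (by positivity : (0:ℝ) ≤ x / E)]
            ring
        _ ≤ ((τ - 1) * x ^ (-τ)) * (x / E) * 1 := by
            apply mul_le_mul_of_nonneg_left h1 (by positivity)
        _ = ((τ - 1) / E) * x ^ (-τ + 1) := by
            rw [Real.rpow_add_one hx0.ne']; field_simp
    · have : AEStronglyMeasurable (fun x : ℝ => ((τ - 1) * x ^ (-τ)) * (x / E * ((fun _ => 1) x * gP c (t₀ * x + B))))
        (volume.restrict (Ioi (1:ℝ))) := meas_aux t₀ (gP c) measurable_gP _ measurable_const
      simpa using this
  · exact meas_aux t₀ (g1 c) measurable_g1 _ measurable_id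
  · filter_upwards [ae_restrict_mem measurableSet_Ioi] with x hx t _
    have hx0 : (0:ℝ) < x := lt_trans zero_lt_one hx
    have hA : (0:ℝ) ≤ (τ - 1) * x ^ (-τ) := mul_nonneg hτ1.le (Real.rpow_nonneg hx0.le _)
    have h1 : |g1 c (t * x + B)| ≤ c := by
      rw [abs_of_nonneg (g1_nonneg hc _)]; exact g1_le hc _
    calc ‖((τ - 1) * x ^ (-τ)) * (x / E * (x * g1 c (t * x + B)))‖
        = ((τ - 1) * x ^ (-τ)) * (x / E * x) * |g1 c (t * x + B)| := by
          simp only [Real.norm_eq_abs, abs_mul, abs_of_nonneg hτ1.le,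
            abs_of_nonneg (Real.rpow_nonneg hx0.le (-τ)),
            abs_of_nonneg (by positivity : (0:ℝ) ≤ x / E), abs_of_nonneg hx0.le]
          ring
      _ ≤ ((τ - 1) * x ^ (-τ)) * (x / E * x) * c := by
          apply mul_le_mul_of_nonneg_left h1 (by positivity)
      _ = ((τ - 1) * c / E) * x ^ (-τ + 2) := by
          rw [show (-τ + 2 : ℝ) = -τ + 1 + 1 by ring, Real.rpow_add_one hx0.ne',
            Real.rpow_add_one hx0.ne']
          field_simp
  · exact (integrableOn_Ioi_rpow_of_lt (by linarith) zero_lt_one).const_mul _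
  · filter_upwards [ae_restrict_mem measurableSet_Ioi] with x hx t _
    have hlin : HasDerivAt (fun t : ℝ => t * x + B) x t := by
      simpa using ((hasDerivAt_id t).mul_const x).add_const B
    have hg : HasDerivAt (fun t => gP c (t * x + B)) (g1 c (t * x + B) * x) t :=
      (hasDerivAt_gP hc _).comp t hlin
    have := ((hg.const_mul (x / E)).const_mul ((τ - 1) * x ^ (-τ)))
    exact this.congr_deriv (by ring)

lemma hasDerivAt_int2 {c τ B E : ℝ} (hc : 2 ≤ c) (hτ : 4 ≤ τ) (hB : 0 ≤ B) (hE : 0 < E)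
    {t₀ : ℝ} (ht₀ : 0 < t₀) :
    HasDerivAt (fun t => ∫ x in Ioi (1:ℝ), ((τ - 1) * x ^ (-τ)) * (x / E * (x * g1 c (t * x + B))))
      (∫ x in Ioi (1:ℝ), ((τ - 1) * x ^ (-τ)) * (x / E * (x * (x * g2 c (t₀ * x + B))))) t₀ := by
  have hτ1 : (0:ℝ) < τ - 1 := by linarith
  have main := hasDerivAt_integral_of_dominated_loc_of_deriv_le (μ := volume.restrict (Ioi 1))
    (F := fun t x => ((τ - 1) * x ^ (-τ)) * (x / E * (x * g1 c (t * x + B))))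
    (F' := fun t x => ((τ - 1) * x ^ (-τ)) * (x / E * (x * (x * g2 c (t * x + B)))))
    (bound := fun x => ((τ - 1) * c / E) * Real.exp (-(t₀ / 2) * x)) (x₀ := t₀)
    (Metric.ball_mem_nhds t₀ (half_pos ht₀)) ?_ ?_ ?_ ?_ ?_ ?_
  · exact main.2
  · filter_upwards with t
    exact meas_aux t (g1 c) measurable_g1 _ measurable_id
  · apply integrableOn_aux (meas_aux t₀ (g1 c) measurable_g1 _ measurable_id)
      (show -τ + 2 < -1 by linarith)
    intro x hx
    have hx0 : (0:ℝ) < x := lt_trans zero_lt_one hx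
    have h1 : |g1 c (t₀ * x + B)| ≤ c := by
      rw [abs_of_nonneg (g1_nonneg hc _)]; exact g1_le hc _
    calc |((τ - 1) * x ^ (-τ)) * (x / E * (x * g1 c (t₀ * x + B)))|
        = ((τ - 1) * x ^ (-τ)) * (x / E * x) * |g1 c (t₀ * x + B)| := by
          simp only [abs_mul, abs_of_nonneg hτ1.le, abs_of_nonneg (Real.rpow_nonneg hx0.le (-τ)),
            abs_of_nonneg (by positivity : (0:ℝ) ≤ x / E), abs_of_nonneg hx0.le]
          ring
      _ ≤ ((τ - 1) * x ^ (-τ)) * (x / E * x) * c := by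
          apply mul_le_mul_of_nonneg_left h1 (by positivity)
      _ = ((τ - 1) * c / E) * x ^ (-τ + 2) := by
          rw [show (-τ + 2 : ℝ) = -τ + 1 + 1 by ring, Real.rpow_add_one hx0.ne',
            Real.rpow_add_one hx0.ne']
          field_simp
  · apply Measurable.aestronglyMeasurable
    apply Measurable.mul (by fun_prop : Measurable fun x : ℝ => (τ - 1) * x ^ (-τ))
    apply Measurable.mul (by fun_prop : Measurable fun x : ℝ => x / E)
    apply Measurable.mul measurable_id
    exact Measurable.mul measurable_id (measurable_g2.comp (by fun_prop))
  · filter_upwards [ae_restrict_mem measurableSet_Ioi] with x hx t ht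
    have hx0 : (0:ℝ) < x := lt_trans zero_lt_one hx
    have hx1 : (1:ℝ) ≤ x := le_of_lt hx
    have htlow : t₀ / 2 ≤ t := by
      have := abs_lt.mp (by simpa [Real.dist_eq] using (Metric.mem_ball.mp ht))
      linarith [this.1]
    have hexp : Real.exp (-(t * x + B)) ≤ Real.exp (-(t₀ / 2) * x) := by
      apply Real.exp_le_exp.mpr
      have h1 : t₀ / 2 * x ≤ t * x := mul_le_mul_of_nonneg_right htlow hx0.le
      linarith
    have h2 : |g2 c (t * x + B)| ≤ c * Real.exp (-(t₀ / 2) * x) :=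
      (abs_g2_le hc _).trans (mul_le_mul_of_nonneg_left hexp (by linarith))
    have hx3 : x ^ (-τ) * (x * (x * x)) ≤ 1 := by
      have : x ^ (-τ) * (x * (x * x)) = x ^ (-τ + 3) := by
        rw [show (-τ + 3 : ℝ) = -τ + 1 + 1 + 1 by ring, Real.rpow_add_one hx0.ne',
          Real.rpow_add_one hx0.ne', Real.rpow_add_one hx0.ne']
        ring
      rw [this]
      exact Real.rpow_le_one_of_one_le_of_nonpos hx1 (by linarith)
    calc ‖((τ - 1) * x ^ (-τ)) * (x / E * (x * (x * g2 c (t * x + B))))‖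
        = ((τ - 1) / E) * (x ^ (-τ) * (x * (x * x))) * |g2 c (t * x + B)| := by
          simp only [Real.norm_eq_abs, abs_mul, abs_of_nonneg hτ1.le,
            abs_of_nonneg (Real.rpow_nonneg hx0.le (-τ)),
            abs_of_nonneg (by positivity : (0:ℝ) ≤ x / E), abs_of_nonneg hx0.le]
          field_simp
      _ ≤ ((τ - 1) / E) * 1 * (c * Real.exp (-(t₀ / 2) * x)) := by
          apply mul_le_mul ?_ h2 (abs_nonneg _) (by positivity)
          exact mul_le_mul_of_nonneg_left hx3 (by positivity)
      _ = ((τ - 1) * c / E) * Real.exp (-(t₀ / 2) * x) := by ring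
  · exact (exp_neg_integrableOn_Ioi 1 (half_pos ht₀)).const_mul _
  · filter_upwards [ae_restrict_mem measurableSet_Ioi] with x hx t ht
    have hlin : HasDerivAt (fun t : ℝ => t * x + B) x t := by
      simpa using ((hasDerivAt_id t).mul_const x).add_const B
    have hg : HasDerivAt (fun t => g1 c (t * x + B)) (g2 c (t * x + B) * x) t :=
      (hasDerivAt_g1 hc _).comp t hlin
    have := (((hg.const_mul x).const_mul (x / E)).const_mul ((τ - 1) * x ^ (-τ)))
    exact this.congr_deriv (by ring)

section Hanalysis

variable {c τ B : ℝ}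

lemma measurable_phi (c τ B : ℝ) : Measurable (fun u : ℝ => u ^ (3 - τ) * g2 c (u + B)) := by
  exact Measurable.mul (by fun_prop) (measurable_g2.comp (by fun_prop))

lemma integrableOn_phi (hc : 2 ≤ c) (hτ : 4 ≤ τ) (hB : 0 ≤ B) {t : ℝ} (ht : 0 < t) :
    IntegrableOn (fun u : ℝ => u ^ (3 - τ) * g2 c (u + B)) (Ioi t) := by
  apply Integrable.mono'
    ((exp_neg_integrableOn_Ioi t zero_lt_one).const_mul (c * t ^ (3 - τ)))
    ((measurable_phi c τ B).aestronglyMeasurable)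
  filter_upwards [ae_restrict_mem measurableSet_Ioi] with u hu
  have hu0 : 0 < u := lt_trans ht hu
  have h1 : u ^ (3 - τ) ≤ t ^ (3 - τ) :=
    Real.rpow_le_rpow_of_nonpos ht (le_of_lt hu) (by linarith)
  have h2 : |g2 c (u + B)| ≤ c * Real.exp (-(u + B)) := abs_g2_le hc _
  have h3 : Real.exp (-(u + B)) ≤ Real.exp (-1 * u) := by
    apply Real.exp_le_exp.mpr; nlinarith [hu.le.trans' ht.le]
  calc ‖u ^ (3 - τ) * g2 c (u + B)‖ = u ^ (3 - τ) * |g2 c (u + B)| := by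
        rw [Real.norm_eq_abs, abs_mul, abs_of_nonneg (Real.rpow_nonneg hu0.le _)]
    _ ≤ t ^ (3 - τ) * (c * Real.exp (-(u + B))) :=
        mul_le_mul h1 h2 (abs_nonneg _) (Real.rpow_nonneg ht.le _)
    _ ≤ t ^ (3 - τ) * (c * Real.exp (-1 * u)) := by
        apply mul_le_mul_of_nonneg_left ?_ (Real.rpow_nonneg ht.le _)
        exact mul_le_mul_of_nonneg_left h3 (by linarith)
    _ = c * t ^ (3 - τ) * Real.exp (-1 * u) := by ring

lemma H_split (hc : 2 ≤ c) (hτ : 4 ≤ τ) (hB : 0 ≤ B) {s t : ℝ} (hs : 0 < s) (hst : s ≤ t) :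
    (∫ u in Ioi s, u ^ (3 - τ) * g2 c (u + B))
      = (∫ u in Ioc s t, u ^ (3 - τ) * g2 c (u + B))
        + ∫ u in Ioi t, u ^ (3 - τ) * g2 c (u + B) := by
  rw [← Ioc_union_Ioi_eq_Ioi hst]
  exact setIntegral_union (Ioc_disjoint_Ioi le_rfl) measurableSet_Ioi
    ((integrableOn_phi hc hτ hB hs).mono_set Ioc_subset_Ioi_self)
    ((integrableOn_phi hc hτ hB (lt_of_lt_of_le hs hst)).mono_set le_rfl)

lemma pos_Ioc (hc : 2 ≤ c) (hτ : 4 ≤ τ) (hB : 0 ≤ B) {s t : ℝ} (hs : 0 < s) (hst : s < t)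
    (ht : t + B ≤ Real.log (c - 1)) :
    0 < ∫ u in Ioc s t, u ^ (3 - τ) * g2 c (u + B) := by
  have hc1 : (0:ℝ) < c - 1 := by linarith
  rw [setIntegral_pos_iff_support_of_nonneg_ae]
  · refine lt_of_lt_of_le (b := volume (Ioo s t)) ?_ (measure_mono ?_)
    · rw [Real.volume_Ioo]; exact ENNReal.ofReal_pos.mpr (by linarith)
    · intro u hu
      have hu0 : 0 < u := lt_trans hs hu.1
      have hexp : Real.exp (u + B) < c - 1 := by
        rw [← Real.exp_log hc1]
        exact Real.exp_lt_exp.mpr (by linarith [hu.2])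
      refine ⟨?_, hu.1, hu.2.le⟩
      exact ne_of_gt (mul_pos (Real.rpow_pos_of_pos hu0 _) (g2_pos hc hexp))
  · filter_upwards [ae_restrict_mem measurableSet_Ioc] with u hu
    have hu0 : 0 < u := lt_trans hs hu.1
    have hexp : Real.exp (u + B) ≤ c - 1 := by
      rw [← Real.exp_log hc1]
      exact Real.exp_le_exp.mpr (by linarith [hu.2])
    exact mul_nonneg (Real.rpow_nonneg hu0.le _) (g2_nonneg hc hexp)
  · exact (integrableOn_phi hc hτ hB hs).mono_set Ioc_subset_Ioi_self

lemma neg_Ioi (hc : 2 ≤ c) (hτ : 4 ≤ τ) (hB : 0 ≤ B) {t : ℝ} (ht0 : 0 < t)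
    (ht : Real.log (c - 1) ≤ t + B) :
    (∫ u in Ioi t, u ^ (3 - τ) * g2 c (u + B)) < 0 := by
  have hc1 : (0:ℝ) < c - 1 := by linarith
  have key : 0 < ∫ u in Ioi t, -(u ^ (3 - τ) * g2 c (u + B)) := by
    rw [setIntegral_pos_iff_support_of_nonneg_ae]
    · refine lt_of_lt_of_le (b := volume (Ioo t (t+1))) ?_ (measure_mono ?_)
      · rw [Real.volume_Ioo]; simp
      · intro u hu
        have hu0 : 0 < u := lt_trans ht0 hu.1
        have hexp : c - 1 < Real.exp (u + B) := by
          rw [← Real.exp_log hc1]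
          exact Real.exp_lt_exp.mpr (by linarith [hu.1])
        refine ⟨?_, hu.1⟩
        simp only [Function.mem_support, neg_ne_zero]
        exact ne_of_lt (mul_neg_of_pos_of_neg (Real.rpow_pos_of_pos hu0 _) (g2_neg hc hexp))
    · filter_upwards [ae_restrict_mem measurableSet_Ioi] with u hu
      have hu0 : 0 < u := lt_trans ht0 hu
      have hexp : c - 1 ≤ Real.exp (u + B) := by
        rw [← Real.exp_log hc1]
        exact Real.exp_le_exp.mpr (by linarith [le_of_lt (show t < u from hu)])
      simp only [Pi.zero_apply, neg_nonneg]
      apply mul_nonpos_of_nonneg_of_nonpos (Real.rpow_nonneg hu0.le _)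
      rw [g2]
      apply div_nonpos_of_nonpos_of_nonneg ?_ (pow_pos (den_pos hc (u+B)) 3).le
      exact mul_nonpos_of_nonneg_of_nonpos (by positivity) (by linarith)
    · exact (integrableOn_phi hc hτ hB ht0).neg
  rw [integral_neg] at key
  linarith

lemma H_small (hc : 2 ≤ c) (hτ : 4 ≤ τ) (hB : 0 ≤ B) (ha : B < Real.log (c - 1)) :
    ∃ s0 : ℝ, 0 < s0 ∧ s0 + B < Real.log (c - 1) ∧
      0 < ∫ u in Ioi s0, u ^ (3 - τ) * g2 c (u + B) := by
  have hc1 : (0:ℝ) < c - 1 := by linarith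
  set A := Real.log (c - 1) - B with hA_def
  have hA : 0 < A := by simp [hA_def]; linarith
  set b := min A 1 / 2 with hb_def
  have hb0 : 0 < b := half_pos (lt_min hA zero_lt_one)
  have hbA : b < A := by
    have := min_le_left A 1; rw [hb_def]; linarith
  have hb1 : b ≤ 1 / 2 := by
    have := min_le_right A 1; rw [hb_def]; linarith
  obtain ⟨u₀, hu₀mem, hmin⟩ := (isCompact_Icc (a := (0:ℝ)) (b := b)).exists_isMinOn
    ⟨0, left_mem_Icc.mpr hb0.le⟩
    (((continuous_g2 hc).comp (continuous_id.add continuous_const)).continuousOn)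
  set m := g2 c (u₀ + B) with hm_def
  have hm : 0 < m := by
    apply g2_pos hc
    rw [← Real.exp_log hc1]
    apply Real.exp_lt_exp.mpr
    have := hu₀mem.2
    simp only [hA_def] at hbA
    linarith
  set Hb := ∫ u in Ioi b, u ^ (3 - τ) * g2 c (u + B) with hHb_def
  set s0 := min (b / 2) (b * Real.exp (-((|Hb| + 1) / m))) with hs0_def
  have hs0 : 0 < s0 := lt_min (half_pos hb0) (mul_pos hb0 (Real.exp_pos _))
  have hs0b : s0 < b := lt_of_le_of_lt (min_le_left _ _) (half_lt_self hb0)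
  refine ⟨s0, hs0, ?_, ?_⟩
  · simp only [hA_def] at hbA; linarith
  have hsplit := H_split hc hτ hB hs0 hs0b.le (c := c) (τ := τ) (B := B) (t := b)
  have hptwise : ∀ u ∈ Ioc s0 b, m * u⁻¹ ≤ u ^ (3 - τ) * g2 c (u + B) := by
    intro u hu
    have hu0 : 0 < u := lt_trans hs0 hu.1
    have hu1 : u ≤ 1 := hu.2.trans (by linarith)
    have hrp : u ^ (-1 : ℝ) ≤ u ^ (3 - τ) :=
      Real.rpow_le_rpow_of_exponent_ge hu0 hu1 (by linarith)
    have hg2 : m ≤ g2 c (u + B) := hmin ⟨hu0.le, hu.2⟩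
    have : u⁻¹ * m ≤ u ^ (3 - τ) * g2 c (u + B) := by
      apply mul_le_mul ?_ hg2 hm.le (Real.rpow_nonneg hu0.le _)
      rw [← Real.rpow_neg_one u]; exact hrp
    linarith [this]
  have hint1 : IntegrableOn (fun u : ℝ => m * u⁻¹) (Ioc s0 b) := by
    apply (ContinuousOn.integrableOn_Icc ?_).mono_set Ioc_subset_Icc_self
    exact ContinuousOn.mul continuousOn_const
      (ContinuousOn.inv₀ continuousOn_id (fun u hu => ne_of_gt (lt_of_lt_of_le hs0 hu.1)))
  have hmono := setIntegral_mono_on hint1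
    ((integrableOn_phi hc hτ hB hs0).mono_set Ioc_subset_Ioi_self) measurableSet_Ioc hptwise
  have hval : (∫ u in Ioc s0 b, m * u⁻¹) = m * (Real.log b - Real.log s0) := by
    rw [← intervalIntegral.integral_of_le hs0b.le, intervalIntegral.integral_const_mul,
      integral_inv_of_pos hs0 hb0, Real.log_div hb0.ne' hs0.ne']
  have hlog : (|Hb| + 1) / m ≤ Real.log b - Real.log s0 := by
    have hs0le : s0 ≤ b * Real.exp (-((|Hb| + 1) / m)) := min_le_right _ _
    have := Real.log_le_log hs0 hs0le
    rw [Real.log_mul hb0.ne' (Real.exp_ne_zero _), Real.log_exp] at this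
    linarith
  have hlb : |Hb| + 1 ≤ m * (Real.log b - Real.log s0) := by
    have h2 := mul_le_mul_of_nonneg_left hlog hm.le
    rwa [mul_div_cancel₀ _ hm.ne'] at h2
  rw [hsplit]
  have := neg_abs_le Hb
  linarith

lemma Hcross (hc : 2 ≤ c) (hτ : 4 ≤ τ) (hB : 0 ≤ B) (ha : B < Real.log (c - 1)) :
    ∃ tstar : ℝ, 0 < tstar ∧
      (∀ t : ℝ, 0 < t → t < tstar → 0 < ∫ u in Ioi t, u ^ (3 - τ) * g2 c (u + B)) ∧
      (∀ t : ℝ, tstar < t → (∫ u in Ioi t, u ^ (3 - τ) * g2 c (u + B)) < 0) := by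
  set A := Real.log (c - 1) - B with hA_def
  have hA : 0 < A := by simp [hA_def]; linarith
  set S := {t : ℝ | 0 < t ∧ t ≤ A ∧ 0 < ∫ u in Ioi t, u ^ (3 - τ) * g2 c (u + B)} with hS_def
  obtain ⟨s0, hs0, hs0A, hs0H⟩ := H_small hc hτ hB ha
  have hs0S : s0 ∈ S := ⟨hs0, by simp only [hA_def]; linarith, hs0H⟩
  have hSbdd : BddAbove S := ⟨A, fun t ht => ht.2.1⟩
  set tstar := sSup S with htstar_def
  have htstar_pos : 0 < tstar := lt_of_lt_of_le hs0 (le_csSup hSbdd hs0S)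
  have htstar_le : tstar ≤ A := csSup_le ⟨s0, hs0S⟩ (fun t ht => ht.2.1)
  refine ⟨tstar, htstar_pos, ?_, ?_⟩
  · intro t ht htlt
    obtain ⟨s, hsS, hts⟩ := exists_lt_of_lt_csSup ⟨s0, hs0S⟩ htlt
    have hsplit := H_split hc hτ hB ht hts.le (c := c) (τ := τ) (B := B) (t := s)
    have hpos := pos_Ioc hc hτ hB ht hts (by have h' := hsS.2.1; simp only [hA_def] at h'; linarith)
    rw [hsplit]
    linarith [hsS.2.2]
  · intro t htlt
    have ht0 : 0 < t := lt_trans htstar_pos htlt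
    rcases le_or_gt t A with htA | htA
    · set t' := (tstar + t) / 2 with ht'_def
      have ht'1 : tstar < t' := by rw [ht'_def]; linarith
      have ht'2 : t' < t := by rw [ht'_def]; linarith
      have ht'0 : 0 < t' := lt_trans htstar_pos ht'1
      have ht'neg : (∫ u in Ioi t', u ^ (3 - τ) * g2 c (u + B)) ≤ 0 := by
        by_contra hcon
        push_neg at hcon
        have : t' ∈ S := ⟨ht'0, by linarith, hcon⟩
        exact absurd (le_csSup hSbdd this) (not_le.mpr ht'1)
      have hsplit := H_split hc hτ hB ht'0 ht'2.le (c := c) (τ := τ) (B := B) (t := t)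
      have hpos := pos_Ioc hc hτ hB ht'0 ht'2 (by simp only [hA_def] at htA; linarith)
      linarith [hsplit ▸ ht'neg]
    · exact neg_Ioi hc hτ hB ht0 (by simp only [hA_def] at htA; linarith)

end Hanalysis

lemma K_eq {c τ B E : ℝ} (hc : 2 ≤ c) (hτ : 4 ≤ τ) (hE : 0 < E) {t : ℝ} (ht : 0 < t) :
    (∫ x in Ioi (1:ℝ), ((τ - 1) * x ^ (-τ)) * (x / E * (x * (x * g2 c (t * x + B)))))
      = ((τ - 1) / E) * (t ^ (τ - 4) * ∫ u in Ioi t, u ^ (3 - τ) * g2 c (u + B)) := by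
  have h1 : ∀ x ∈ Ioi (1:ℝ), ((τ - 1) * x ^ (-τ)) * (x / E * (x * (x * g2 c (t * x + B))))
      = ((τ - 1) / E) * (x ^ (3 - τ) * g2 c (t * x + B)) := by
    intro x hx
    have hx0 : (0:ℝ) < x := lt_trans zero_lt_one hx
    rw [show (3 - τ : ℝ) = -τ + 1 + 1 + 1 by ring, Real.rpow_add_one hx0.ne',
      Real.rpow_add_one hx0.ne', Real.rpow_add_one hx0.ne']
    field_simp
  rw [setIntegral_congr_fun measurableSet_Ioi h1, integral_const_mul]
  congr 1
  have cov := integral_comp_mul_left_Ioi (fun u => u ^ (3 - τ) * g2 c (u + B)) 1 ht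
  simp only [mul_one] at cov
  have h2 : ∀ x ∈ Ioi (1:ℝ), (t * x) ^ (3 - τ) * g2 c (t * x + B)
      = t ^ (3 - τ) * (x ^ (3 - τ) * g2 c (t * x + B)) := by
    intro x hx
    have hx0 : (0:ℝ) < x := lt_trans zero_lt_one hx
    rw [Real.mul_rpow ht.le hx0.le]; ring
  rw [setIntegral_congr_fun measurableSet_Ioi h2, integral_const_mul, smul_eq_mul] at cov
  have hne : t ^ (3 - τ) ≠ 0 := (Real.rpow_pos_of_pos ht _).ne'
  apply mul_left_cancel₀ hne
  rw [cov, ← mul_assoc, ← Real.rpow_add ht,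
    show (3 - τ + (τ - 4) : ℝ) = -1 by ring, Real.rpow_neg_one]


/-- The function `𝓕_B(t) = E[(W/E[W])·(e^{tW+B}−1)/(e^{tW+B}+q−1)]`. -/
noncomputable def Ffun {Ω : Type*} [MeasurableSpace Ω] (μ : Measure Ω)
    (W : Ω → ℝ) (q : ℕ) (B : ℝ) (t : ℝ) : ℝ :=
  ∫ ω, (W ω / (∫ ω', W ω' ∂μ)) * (Real.exp (t * W ω + B) - 1) /
    (Real.exp (t * W ω + B) + q - 1) ∂μ

/-- **Pareto weights with `τ ≥ 4`** satisfy the unique zero-crossing condition: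
`𝓕_B''` is first positive and then negative. -/
theorem pareto_tau_ge_four_zero_crossing
    {Ω : Type*} [MeasurableSpace Ω] (μ : Measure Ω) [IsProbabilityMeasure μ]
    (W : Ω → ℝ) (hWmeas : Measurable W)
    (q : ℕ) (hq : 3 ≤ q) (B : ℝ) (hB : 0 ≤ B)
    (hBq : 1 < Real.exp (-B) * ((q : ℝ) - 1))
    (τ : ℝ) (hτ : 4 ≤ τ)
    -- `W` is Pareto with parameter `τ`: its law has density `(τ−1)w^{−τ}` on `[1,∞)`
    (hlaw : μ.map W = (volume : Measure ℝ).withDensity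
      (fun x => ENNReal.ofReal
        (Set.indicator (Set.Ici (1 : ℝ)) (fun v => (τ - 1) * v ^ (-τ)) x))) :
    ∃ tstar : ℝ, 0 < tstar ∧
      (∀ t : ℝ, 0 < t → t < tstar → 0 < deriv (deriv (Ffun μ W q B)) t) ∧
      (∀ t : ℝ, tstar < t → deriv (deriv (Ffun μ W q B)) t < 0) := by
  set c : ℝ := (q : ℝ) with hc_def
  have hq3 : (3:ℝ) ≤ c := by rw [hc_def]; exact_mod_cast hq
  have hc : (2:ℝ) ≤ c := by linarith
  set E : ℝ := (τ - 1) / (τ - 2) with hE_def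
  have hE : 0 < E := div_pos (by linarith) (by linarith)
  have hEW : (∫ ω', W ω' ∂μ) = E := pareto_exp μ W hWmeas τ hτ hlaw
  have ha : B < Real.log (c - 1) := by
    have hc1 : (0:ℝ) < c - 1 := by linarith
    have hlt : Real.exp B < c - 1 := by
      have h1 : Real.exp B * 1 < Real.exp B * (Real.exp (-B) * (c - 1)) :=
        mul_lt_mul_of_pos_left hBq (Real.exp_pos B)
      rw [mul_one, ← mul_assoc, ← Real.exp_add, add_neg_cancel, Real.exp_zero, one_mul] at h1
      exact h1
    have := Real.log_lt_log (Real.exp_pos B) hlt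
    rwa [Real.log_exp] at this
  -- Step 1: representation of Ffun as an integral over (1, ∞)
  have Frep : Ffun μ W q B = fun t =>
      ∫ x in Ioi (1:ℝ), ((τ - 1) * x ^ (-τ)) * (x / E * gP c (t * x + B)) := by
    funext t
    have hfm : Measurable (fun x : ℝ => x / E * gP c (t * x + B)) :=
      Measurable.mul (by fun_prop) (measurable_gP.comp (by fun_prop))
    have h1 : Ffun μ W q B t = ∫ ω, (fun x => x / E * gP c (t * x + B)) (W ω) ∂μ := by
      simp only [Ffun, hEW, gP, mul_div_assoc]
      rfl
    rw [h1, pareto_integral_rep μ W hWmeas τ hτ hlaw _ hfm]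
  -- Step 2: first derivative
  have hderiv1 : deriv (Ffun μ W q B) = fun t =>
      ∫ x in Ioi (1:ℝ), ((τ - 1) * x ^ (-τ)) * (x / E * (x * g1 c (t * x + B))) := by
    funext t
    rw [Frep]
    exact (hasDerivAt_int1 hc hτ hB hE t).deriv
  -- Step 3: second derivative at t > 0 and sign analysis
  obtain ⟨tstar, htstar, hpos, hneg⟩ := Hcross (τ := τ) hc hτ hB ha
  have hsecond : ∀ t : ℝ, 0 < t → deriv (deriv (Ffun μ W q B)) t
      = ((τ - 1) / E) * (t ^ (τ - 4) * ∫ u in Ioi t, u ^ (3 - τ) * g2 c (u + B)) := by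
    intro t ht
    rw [hderiv1, (hasDerivAt_int2 hc hτ hB hE ht).deriv]
    exact K_eq hc hτ hE ht
  refine ⟨tstar, htstar, ?_, ?_⟩
  · intro t ht htlt
    rw [hsecond t ht]
    exact mul_pos (div_pos (by linarith) hE)
      (mul_pos (Real.rpow_pos_of_pos ht _) (hpos t ht htlt))
  · intro t htlt
    have ht : 0 < t := lt_trans htstar htlt
    rw [hsecond t ht]
    exact mul_neg_of_pos_of_neg (div_pos (by linarith) hE)
      (mul_neg_of_pos_of_neg (Real.rpow_pos_of_pos ht _) (hneg t htlt))
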